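/- The partial derivatives of V_S are given in closed form by ∂V_S/∂n0 (n0,n1) = σ⁴ / D(n0,n1)² and ∂V_S/∂n1 (n0,n1) = (n0 + σ² + 2·σ²·n0 + 1)² / D(n0,n1)² for all n0, n1 ≥ 0; in particular, both partial derivatives are strictly positive, so V_S is strictly increasing in each of its two arguments on [0,∞)×[0,∞). -/

import Mathlib

/-- The denominator `D(n0,n1) = σ²(n0+n1+2 n0 n1) + (1+n0)(1+n1)`. -/
noncomputable def Dden (σ n0 n1 : ℝ) : ℝ :=
  σ^2 * (n0 + n1 + 2*n0*n1) + (1+n0)*(1+n1)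

/-- Forecaster value `V_L`. -/
noncomputable def VL (σ n0 n1 : ℝ) : ℝ :=
  σ^4 * (n0 + n1 + 2*n0*n1) / Dden σ n0 n1

/-- Nowcaster value `V_S`. -/
noncomputable def VS (σ n0 n1 : ℝ) : ℝ :=
  VL σ n0 n1 + (3*σ^2*n0*n1 + 2*σ^2*n1 + n1 + n0*n1) / Dden σ n0 n1

lemma Dden_pos (σ n0 n1 : ℝ) (hn0 : 0 ≤ n0) (hn1 : 0 ≤ n1) : 0 < Dden σ n0 n1 := by
  unfold Dden
  nlinarith [sq_nonneg σ, mul_nonneg hn0 hn1, sq_nonneg (σ*n0), sq_nonneg (σ*n1)]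

lemma VS_eq (σ n0 n1 : ℝ) : VS σ n0 n1 =
    (σ^4 * (n0 + n1 + 2*n0*n1) + (3*σ^2*n0*n1 + 2*σ^2*n1 + n1 + n0*n1)) / Dden σ n0 n1 := by
  unfold VS VL
  rw [← add_div]

lemma hasDeriv_n0 (σ : ℝ) (n0 n1 : ℝ) (hD : Dden σ n0 n1 ≠ 0) :
    HasDerivAt (fun x => VS σ x n1) (σ^4 / (Dden σ n0 n1)^2) n0 := by
  have hN : HasDerivAt (fun x => σ^4 * (x + n1 + 2*x*n1) + (3*σ^2*x*n1 + 2*σ^2*n1 + n1 + x*n1))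
      (σ^4*(1+2*n1) + 3*σ^2*n1 + n1) n0 := by
    have h := (hasDerivAt_id n0)
    convert (((h.add_const n1).add ((h.const_mul 2).mul_const n1)).const_mul (σ^4)).add
      ((((h.const_mul (3*σ^2)).mul_const n1).add_const (2*σ^2*n1 + n1)).add (h.mul_const n1)) using 1
    · rfl
    · rfl
    · funext x; simp only [id_eq, Pi.add_apply]; ring
    · ring
  have hDd : HasDerivAt (fun x => Dden σ x n1) (σ^2*(1+2*n1) + (1+n1)) n0 := by
    have h := (hasDerivAt_id n0)
    convert (((h.add_const n1).add ((h.const_mul 2).mul_const n1)).const_mul (σ^2)).add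
      ((h.add_const 1).mul_const (1+n1)) using 1
    · rfl
    · rfl
    · funext x; unfold Dden; simp only [id_eq, Pi.add_apply]; ring
    · ring
  have := hN.div hDd hD
  simp only [Pi.div_def, ← VS_eq] at this
  convert this using 1
  · rfl
  · rfl
  rw [div_eq_div_iff (by positivity) (by positivity)]
  unfold Dden; ring

lemma hasDeriv_n1 (σ : ℝ) (n0 n1 : ℝ) (hD : Dden σ n0 n1 ≠ 0) :
    HasDerivAt (fun y => VS σ n0 y) ((n0 + σ^2 + 2*σ^2*n0 + 1)^2 / (Dden σ n0 n1)^2) n1 := by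
  have hN : HasDerivAt (fun y => σ^4 * (n0 + y + 2*n0*y) + (3*σ^2*n0*y + 2*σ^2*y + y + n0*y))
      (σ^4*(1+2*n0) + 3*σ^2*n0 + 2*σ^2 + 1 + n0) n1 := by
    have h := (hasDerivAt_id n1)
    convert (((h.const_add n0).add (h.const_mul (2*n0))).const_mul (σ^4)).add
      ((((h.const_mul (3*σ^2*n0)).add (h.const_mul (2*σ^2))).add h).add (h.const_mul n0)) using 1
    · rfl
    · rfl
    · rfl
    · ring
  have hDd : HasDerivAt (fun y => Dden σ n0 y) (σ^2*(1+2*n0) + (1+n0)) n1 := by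
    have h := (hasDerivAt_id n1)
    convert (((h.const_add n0).add (h.const_mul (2*n0))).const_mul (σ^2)).add
      ((h.const_add 1).const_mul (1+n0)) using 1
    · rfl
    · rfl
    · rfl
    · ring
  have := hN.div hDd hD
  simp only [Pi.div_def, ← VS_eq] at this
  convert this using 1
  · rfl
  · rfl
  rw [div_eq_div_iff (by positivity) (by positivity)]
  unfold Dden; ring

/-- Closed-form partial derivatives of `V_S`, their positivity, and strict
monotonicity of `V_S` in each argument on `[0,∞)×[0,∞)`. -/
theorem stmt1 (σ : ℝ) (hσ : 0 < σ) :
    (∀ n0 n1 : ℝ, 0 ≤ n0 → 0 ≤ n1 →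
      HasDerivAt (fun x => VS σ x n1) (σ^4 / (Dden σ n0 n1)^2) n0 ∧
      HasDerivAt (fun y => VS σ n0 y) ((n0 + σ^2 + 2*σ^2*n0 + 1)^2 / (Dden σ n0 n1)^2) n1 ∧
      0 < σ^4 / (Dden σ n0 n1)^2 ∧
      0 < (n0 + σ^2 + 2*σ^2*n0 + 1)^2 / (Dden σ n0 n1)^2) ∧
    (∀ n1 : ℝ, 0 ≤ n1 → StrictMonoOn (fun x => VS σ x n1) (Set.Ici 0)) ∧
    (∀ n0 : ℝ, 0 ≤ n0 → StrictMonoOn (fun y => VS σ n0 y) (Set.Ici 0)) := by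
  have key : ∀ n0 n1 : ℝ, 0 ≤ n0 → 0 ≤ n1 →
      HasDerivAt (fun x => VS σ x n1) (σ^4 / (Dden σ n0 n1)^2) n0 ∧
      HasDerivAt (fun y => VS σ n0 y) ((n0 + σ^2 + 2*σ^2*n0 + 1)^2 / (Dden σ n0 n1)^2) n1 ∧
      0 < σ^4 / (Dden σ n0 n1)^2 ∧
      0 < (n0 + σ^2 + 2*σ^2*n0 + 1)^2 / (Dden σ n0 n1)^2 := by
    intro n0 n1 hn0 hn1
    have hD := Dden_pos σ n0 n1 hn0 hn1
    have hbase : 0 < n0 + σ^2 + 2*σ^2*n0 + 1 := by positivity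
    exact ⟨hasDeriv_n0 σ n0 n1 hD.ne', hasDeriv_n1 σ n0 n1 hD.ne',
      by positivity, by positivity⟩
  refine ⟨key, ?_, ?_⟩
  · intro n1 hn1
    apply strictMonoOn_of_deriv_pos (convex_Ici 0)
    · intro x hx
      exact ((key x n1 hx hn1).1.continuousAt).continuousWithinAt
    · intro x hx
      rw [interior_Ici] at hx
      have h := key x n1 hx.le hn1
      rw [h.1.deriv]
      exact h.2.2.1
  · intro n0 hn0
    apply strictMonoOn_of_deriv_pos (convex_Ici 0)
    · intro y hy
      exact ((key n0 y hn0 hy).2.1.continuousAt).continuousWithinAt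
    · intro y hy
      rw [interior_Ici] at hy
      have h := key n0 y hn0 hy.le
      rw [h.2.1.deriv]
      exact h.2.2.2
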